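/- Let ℓ ≥ 1, q = 2^ℓ, and let r be an integer with 1 ≤ r ≤ q − 1. Let C = { f ∈ F_q[x,y] : deg_x f ≤ q−1, deg_y f ≤ q−1, and for all α, β, γ ∈ F_q the remainder of f(X, αX²+βX+γ) upon division by X^q − X has degree less than q − r } be the quadratic-lifted Reed–Solomon code. Then: (i) every nonzero f ∈ C has at least qr + 1 nonzero evaluations on F_q², and (ii) there exists a nonzero f ∈ C with at most qr + q nonzero evaluations on F_q². Hence the minimum Hamming distance d of the evaluation code {(f(u,v))_{(u,v)∈F_q²} : f ∈ C} satisfies qr + 1 ≤ d ≤ qr + q. -/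

import Mathlib

open Polynomial MvPolynomial Finset

universe u

section Helpers
/-- A nonzero bivariate polynomial with individual degrees `< |F|` has a nonzero evaluation. -/
lemma auxA {F : Type u} [Field F] [Fintype F] (f : MvPolynomial (Fin 2) F)
    (h0 : degreeOf 0 f ≤ Fintype.card F - 1) (h1 : degreeOf 1 f ≤ Fintype.card F - 1)
    (hf : f ≠ 0) : ∃ w : Fin 2 → F, MvPolynomial.eval w f ≠ 0 := by
  by_contra h
  push_neg at h
  apply hf
  set e : Fin 2 → ULift.{u} (Fin 2) := fun i => ULift.up i with he
  have hinj : Function.Injective e := fun a b hab => by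
    simpa [he] using congrArg ULift.down hab
  have hdeg : ∀ i : Fin 2, degreeOf i f ≤ Fintype.card F - 1 := by
    intro i; fin_cases i <;> assumption
  have hmem : rename e f ∈ restrictDegree (ULift.{u} (Fin 2)) F (Fintype.card F - 1) := by
    rw [mem_restrictDegree]
    intro s hs i
    have : degreeOf i (rename e f) ≤ Fintype.card F - 1 := by
      obtain ⟨j, rfl⟩ : ∃ j, e j = i := ⟨i.down, rfl⟩
      rw [MvPolynomial.degreeOf_rename_of_injective hinj]
      exact hdeg j
    exact MvPolynomial.degreeOf_le_iff.mp this s hs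
  have hz : rename e f = 0 := by
    apply MvPolynomial.eq_zero_of_eval_eq_zero
    · intro v
      rw [MvPolynomial.eval_rename]
      exact h _
    · exact hmem
  have h2 : rename e f = rename e 0 := by rw [hz, map_zero]
  exact MvPolynomial.rename_injective e hinj h2

lemma auxB {F : Type*} [CommSemiring F] (x : F) (w : Fin 2 → F[X]) (f : MvPolynomial (Fin 2) F) :
    (MvPolynomial.aeval w f).eval x = MvPolynomial.eval (fun i => (w i).eval x) f := by
  induction f using MvPolynomial.induction_on with
  | C a => simp
  | add p q hp hq => simp [hp, hq]
  | mul_X p i hp => simp [hp]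

lemma auxM {F : Type*} [Field F] {q : ℕ} (h2 : 2 ≤ q) :
    (Polynomial.X ^ q - Polynomial.X : F[X]).Monic := by
  have h : q - 1 + 1 = q := by omega
  rw [← h]
  apply Polynomial.monic_X_pow_sub
  rw [Polynomial.degree_X]
  exact_mod_cast (show (1:ℕ) < q - 1 + 1 by omega)

lemma auxM0 {F : Type*} [Field F] [Fintype F] {q : ℕ} (hq : Fintype.card F = q) (x : F) :
    (Polynomial.X ^ q - Polynomial.X : F[X]).eval x = 0 := by
  simp [← hq, FiniteField.pow_card]

lemma auxMod {F : Type*} [Field F] [Fintype F] {q : ℕ} (hq : Fintype.card F = q) (h2 : 2 ≤ q)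
    (p : F[X]) (x : F) :
    (p %ₘ (Polynomial.X ^ q - Polynomial.X)).eval x = p.eval x := by
  conv_rhs => rw [← Polynomial.modByMonic_add_div p (Polynomial.X ^ q - Polynomial.X)]
  simp [auxM0 hq]

lemma auxC {F : Type*} [Field F] [Fintype F] [DecidableEq F] {q r : ℕ} (hq : Fintype.card F = q)
    (hrq : r + 1 ≤ q) (g : F[X]) (hdeg : g.degree < ((q - r : ℕ) : WithBot ℕ))
    {u : F} (hu : g.eval u ≠ 0) :
    r + 1 ≤ (Finset.univ.filter fun x => g.eval x ≠ 0).card := by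
  have hg : g ≠ 0 := fun h => hu (by simp [h])
  have hnd : g.natDegree < q - r := (Polynomial.natDegree_lt_iff_degree_lt hg).mpr hdeg
  have hzero : (Finset.univ.filter fun x => g.eval x = 0).card ≤ g.natDegree := by
    have hsub : (Finset.univ.filter fun x => g.eval x = 0) ⊆ g.roots.toFinset := by
      intro x hx
      simp only [Finset.mem_filter] at hx
      simpa [Multiset.mem_toFinset, Polynomial.mem_roots hg] using hx.2
    calc (Finset.univ.filter fun x => g.eval x = 0).card ≤ g.roots.toFinset.card :=
          Finset.card_le_card hsub
      _ ≤ Multiset.card g.roots := g.roots.toFinset_card_le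
      _ ≤ g.natDegree := Polynomial.card_roots' g
  have hsplit : (Finset.univ.filter fun x => g.eval x = 0).card
      + (Finset.univ.filter fun x => g.eval x ≠ 0).card = q := by
    rw [Finset.card_filter_add_card_filter_not, Finset.card_univ, hq]
  omega

/-- Part (i): the lower bound on the number of nonzero evaluations. -/
lemma partI {F : Type u} [Field F] [Fintype F] [DecidableEq F] {q r : ℕ}
    (hq : Fintype.card F = q) (h2 : 2 ≤ q) (hrq : r + 1 ≤ q)
    (f : MvPolynomial (Fin 2) F)
    (h0 : degreeOf 0 f ≤ q - 1) (h1 : degreeOf 1 f ≤ q - 1)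
    (hcode : ∀ α β γ : F,
      ((MvPolynomial.aeval
            ![Polynomial.X,
              Polynomial.C α * Polynomial.X ^ 2 + Polynomial.C β * Polynomial.X +
                Polynomial.C γ] f) %ₘ
          (Polynomial.X ^ q - Polynomial.X)).degree < ((q - r : ℕ) : WithBot ℕ))
    (hf : f ≠ 0) :
    q * r + 1 ≤ Nat.card {p : F × F // MvPolynomial.eval ![p.1, p.2] f ≠ 0} := by
  classical
  obtain ⟨w, hw0⟩ := auxA f (hq ▸ h0) (hq ▸ h1) hf
  set u := w 0 with hu
  set v := w 1 with hv
  have hw : MvPolynomial.eval ![u, v] f ≠ 0 := by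
    have : ![u, v] = w := by funext i; fin_cases i <;> rfl
    rwa [this]
  -- the family of quadratic curves through (u, v)
  set φ : F × F → F → F := fun ab x => ab.1 * x ^ 2 + ab.2 * x + (v - ab.1 * u ^ 2 - ab.2 * u)
    with hφ
  have hφu : ∀ ab : F × F, φ ab u = v := by intro ab; simp only [hφ]; ring
  have hevalP : ∀ ab : F × F, ∀ x : F,
      (MvPolynomial.aeval
          ![Polynomial.X, Polynomial.C ab.1 * Polynomial.X ^ 2 + Polynomial.C ab.2 * Polynomial.X
            + Polynomial.C (v - ab.1 * u ^ 2 - ab.2 * u)] f).eval x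
        = MvPolynomial.eval ![x, φ ab x] f := by
    intro ab x
    have harg : (fun i => Polynomial.eval x
        ((![Polynomial.X, Polynomial.C ab.1 * Polynomial.X ^ 2 + Polynomial.C ab.2 * Polynomial.X
            + Polynomial.C (v - ab.1 * u ^ 2 - ab.2 * u)] : Fin 2 → F[X]) i))
        = ![x, φ ab x] := by
      funext i; fin_cases i <;> simp [hφ]
    rw [auxB, harg]
  -- each curve contains at least r nonzero points besides (u,v)
  have hcurve : ∀ ab : F × F,
      r ≤ (Finset.univ.filter
        fun x => x ≠ u ∧ MvPolynomial.eval ![x, φ ab x] f ≠ 0).card := by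
    intro ab
    set g := (MvPolynomial.aeval
        ![Polynomial.X, Polynomial.C ab.1 * Polynomial.X ^ 2 + Polynomial.C ab.2 * Polynomial.X
          + Polynomial.C (v - ab.1 * u ^ 2 - ab.2 * u)] f) %ₘ
        (Polynomial.X ^ q - Polynomial.X) with hg
    have hgev : ∀ x, g.eval x = MvPolynomial.eval ![x, φ ab x] f := fun x =>
      (auxMod hq h2 _ x).trans (hevalP ab x)
    have hgu : g.eval u ≠ 0 := by rw [hgev, hφu]; exact hw
    have hcnt := auxC hq hrq g (hcode ab.1 ab.2 _) hgu
    have hA : (Finset.univ.filter fun x => x ≠ u ∧ MvPolynomial.eval ![x, φ ab x] f ≠ 0)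
        = (Finset.univ.filter fun x => g.eval x ≠ 0).erase u := by
      ext x
      simp only [Finset.mem_filter, Finset.mem_erase, Finset.mem_univ, true_and, hgev]
    rw [hA]
    have hm : u ∈ Finset.univ.filter fun x => g.eval x ≠ 0 :=
      Finset.mem_filter.mpr ⟨Finset.mem_univ _, hgu⟩
    rw [Finset.card_erase_of_mem hm]
    omega
  set Z : Finset (F × F) := Finset.univ.filter fun p => MvPolynomial.eval ![p.1, p.2] f ≠ 0
    with hZ
  have huvZ : (u, v) ∈ Z := Finset.mem_filter.mpr ⟨Finset.mem_univ _, hw⟩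
  set T : Finset ((F × F) × F) := Finset.univ.filter
    fun t => t.2 ≠ u ∧ MvPolynomial.eval ![t.2, φ t.1 t.2] f ≠ 0 with hT
  -- lower bound on T
  have hTlow : q * q * r ≤ T.card := by
    rw [Finset.card_eq_sum_card_fiberwise
      (f := fun t : (F × F) × F => t.1) (t := Finset.univ) (fun t _ => Finset.mem_univ _)]
    have hfib : ∀ ab : F × F, r ≤ (T.filter fun t => t.1 = ab).card := by
      intro ab
      refine le_trans (hcurve ab) (Finset.card_le_card_of_injOn (fun x => (ab, x)) ?_ ?_)
      · intro x hx
        simp only [Finset.mem_coe, Finset.mem_filter, Finset.mem_univ, true_and] at hx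
        exact Finset.mem_filter.mpr ⟨Finset.mem_filter.mpr ⟨Finset.mem_univ _, hx⟩, rfl⟩
      · intro x _ y _ hxy
        exact congrArg Prod.snd hxy
    calc q * q * r = ∑ _ab : F × F, r := by
          rw [Finset.sum_const, Finset.card_univ, Fintype.card_prod, hq, smul_eq_mul]
      _ ≤ ∑ ab : F × F, (T.filter fun t => t.1 = ab).card :=
          Finset.sum_le_sum fun ab _ => hfib ab
  -- upper bound on T
  have hTup : T.card ≤ (Z.card - 1) * q := by
    have hmaps : ∀ t ∈ T, (t.2, φ t.1 t.2) ∈ Z.erase (u, v) := by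
      intro t ht
      simp only [hT, Finset.mem_filter, Finset.mem_univ, true_and] at ht
      refine Finset.mem_erase.mpr ⟨?_, Finset.mem_filter.mpr ⟨Finset.mem_univ _, ht.2⟩⟩
      intro hcontra
      exact ht.1 (congrArg Prod.fst hcontra)
    rw [Finset.card_eq_sum_card_fiberwise hmaps]
    have hfib : ∀ p ∈ Z.erase (u, v),
        (T.filter fun t => (t.2, φ t.1 t.2) = p).card ≤ q := by
      intro p _
      rw [← hq, ← Finset.card_univ]
      apply Finset.card_le_card_of_injOn (fun t => t.1.1) (fun _ _ => Finset.mem_univ _)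
      intro t ht t' ht' h11
      simp only [Finset.coe_filter, Set.mem_setOf_eq] at ht ht'
      obtain ⟨htT, htp⟩ := ht
      obtain ⟨ht'T, ht'p⟩ := ht'
      simp only [hT, Finset.mem_filter, Finset.mem_univ, true_and] at htT ht'T
      have f1 : t.2 = p.1 := congrArg Prod.fst htp
      have f2 : t'.2 = p.1 := congrArg Prod.fst ht'p
      have h2eq : t.2 = t'.2 := by rw [f1, f2]
      have e1 : φ t.1 t.2 = p.2 := congrArg Prod.snd htp
      have e2 : φ t'.1 t'.2 = p.2 := congrArg Prod.snd ht'p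
      have hφeq : φ t.1 t.2 = φ t'.1 t'.2 := e1.trans e2.symm
      rw [← h2eq] at hφeq
      have ha : t.1.1 = t'.1.1 := h11
      have hne : t.2 - u ≠ 0 := sub_ne_zero.mpr htT.1
      have hβ : t.1.2 = t'.1.2 := by
        have heq : t.1.2 * (t.2 - u) = t'.1.2 * (t.2 - u) := by
          simp only [hφ] at hφeq
          linear_combination hφeq - (t.2 ^ 2 - u ^ 2) * ha
        exact mul_right_cancel₀ hne heq
      have h1eq : t.1 = t'.1 := Prod.ext h11 hβ
      exact Prod.ext h1eq h2eq
    calc ∑ p ∈ Z.erase (u, v), (T.filter fun t => (t.2, φ t.1 t.2) = p).card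
        ≤ ∑ _p ∈ Z.erase (u, v), q := Finset.sum_le_sum hfib
      _ = (Z.erase (u, v)).card * q := by rw [Finset.sum_const, smul_eq_mul]
      _ = (Z.card - 1) * q := by rw [Finset.card_erase_of_mem huvZ]
  -- conclude
  have hZ1 : 1 ≤ Z.card := Finset.card_pos.mpr ⟨_, huvZ⟩
  have hmain : q * r ≤ Z.card - 1 := by
    have h' : (q * r) * q ≤ (Z.card - 1) * q := by
      calc (q * r) * q = q * q * r := by ring
        _ ≤ T.card := hTlow
        _ ≤ (Z.card - 1) * q := hTup
    exact Nat.le_of_mul_le_mul_right h' (by omega)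
  have hcard : Nat.card {p : F × F // MvPolynomial.eval ![p.1, p.2] f ≠ 0} = Z.card := by
    rw [Nat.card_eq_fintype_card, Fintype.card_subtype]
  omega

end Helpers

lemma auxD {R : Type*} [CommRing R] {σ : Type*} (i : σ) {A : Type*} (s : Finset A)
    (g : A → MvPolynomial σ R) :
    degreeOf i (∏ a ∈ s, g a) ≤ ∑ a ∈ s, degreeOf i (g a) := by
  induction s using Finset.cons_induction with
  | empty => rw [Finset.prod_empty, Finset.sum_empty, ← MvPolynomial.C_1, MvPolynomial.degreeOf_C]
  | cons a s ha ih =>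
    rw [Finset.prod_cons, Finset.sum_cons]
    exact le_trans (MvPolynomial.degreeOf_mul_le _ _ _) (add_le_add le_rfl ih)

lemma partII {F : Type*} [Field F] [Fintype F] [DecidableEq F] {q r : ℕ}
    (hq : Fintype.card F = q) (h2 : 2 ≤ q) (hrq : r + 1 ≤ q) :
    ∃ f : MvPolynomial (Fin 2) F,
      MvPolynomial.degreeOf 0 f ≤ q - 1 ∧
      MvPolynomial.degreeOf 1 f ≤ q - 1 ∧
      (∀ α β γ : F,
        ((MvPolynomial.aeval
              ![Polynomial.X,
                Polynomial.C α * Polynomial.X ^ 2 + Polynomial.C β * Polynomial.X +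
                  Polynomial.C γ] f) %ₘ
            (Polynomial.X ^ q - Polynomial.X)).degree < ((q - r : ℕ) : WithBot ℕ)) ∧
      f ≠ 0 ∧
      Nat.card {p : F × F // MvPolynomial.eval ![p.1, p.2] f ≠ 0} ≤ q * r + q := by
  obtain ⟨S, -, hS⟩ := Finset.exists_subset_card_eq
    (show q - 1 - r ≤ (Finset.univ : Finset F).card by rw [Finset.card_univ, hq]; omega)
  refine ⟨∏ a ∈ S, (MvPolynomial.X 0 - MvPolynomial.C a), ?_, ?_, ?_, ?_, ?_⟩
  case _ =>
    refine le_trans (auxD _ _ _) ?_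
    have h1 : ∀ a ∈ S, degreeOf (0 : Fin 2) (MvPolynomial.X 0 - MvPolynomial.C a) ≤ 1 := by
      intro a _
      rw [sub_eq_add_neg, ← MvPolynomial.C_neg]
      refine le_trans (MvPolynomial.degreeOf_add_le _ _ _) ?_
      simp [MvPolynomial.degreeOf_X, MvPolynomial.degreeOf_C]
    calc ∑ a ∈ S, degreeOf (0 : Fin 2) (MvPolynomial.X 0 - MvPolynomial.C a)
        ≤ ∑ _a ∈ S, 1 := Finset.sum_le_sum h1
      _ = S.card := by simp
      _ ≤ q - 1 := by omega
  case _ =>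
    refine le_trans (auxD _ _ _) ?_
    have h1 : ∀ a ∈ S, degreeOf (1 : Fin 2) (MvPolynomial.X 0 - MvPolynomial.C a) ≤ 0 := by
      intro a _
      rw [sub_eq_add_neg, ← MvPolynomial.C_neg]
      refine le_trans (MvPolynomial.degreeOf_add_le _ _ _) ?_
      simp [MvPolynomial.degreeOf_X, MvPolynomial.degreeOf_C]
    calc ∑ a ∈ S, degreeOf (1 : Fin 2) (MvPolynomial.X 0 - MvPolynomial.C a)
        ≤ ∑ _a ∈ S, 0 := Finset.sum_le_sum h1
      _ = 0 := by simp
      _ ≤ q - 1 := by omega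
  case _ =>
    intro α β γ
    have haev : (MvPolynomial.aeval
        ![Polynomial.X,
          Polynomial.C α * Polynomial.X ^ 2 + Polynomial.C β * Polynomial.X + Polynomial.C γ]
        (∏ a ∈ S, (MvPolynomial.X (0 : Fin 2) - MvPolynomial.C a)))
        = ∏ a ∈ S, (Polynomial.X - Polynomial.C a) := by
      rw [map_prod]
      refine Finset.prod_congr rfl fun a _ => ?_
      simp [Polynomial.algebraMap_eq]
    rw [haev]
    have hp0 : ∀ a ∈ S, (Polynomial.X - Polynomial.C a : F[X]) ≠ 0 :=
      fun a _ => Polynomial.X_sub_C_ne_zero a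
    have hmonic : (∏ a ∈ S, (Polynomial.X - Polynomial.C a) : F[X]).Monic :=
      Polynomial.monic_prod_of_monic _ _ fun a _ => Polynomial.monic_X_sub_C a
    have hnd : (∏ a ∈ S, (Polynomial.X - Polynomial.C a) : F[X]).natDegree = S.card := by
      rw [Polynomial.natDegree_prod _ _ hp0]
      simp [Polynomial.natDegree_X_sub_C]
    have hdp : (∏ a ∈ S, (Polynomial.X - Polynomial.C a) : F[X]).degree
        = ((q - 1 - r : ℕ) : WithBot ℕ) := by
      rw [Polynomial.degree_eq_natDegree hmonic.ne_zero, hnd, hS]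
    have hdm : (Polynomial.X ^ q - Polynomial.X : F[X]).degree = (q : WithBot ℕ) := by
      rw [Polynomial.degree_sub_eq_left_of_degree_lt, Polynomial.degree_X_pow]
      rw [Polynomial.degree_X_pow, Polynomial.degree_X]
      exact_mod_cast (show 1 < q by omega)
    have hself : (∏ a ∈ S, (Polynomial.X - Polynomial.C a) : F[X]) %ₘ
        (Polynomial.X ^ q - Polynomial.X) = ∏ a ∈ S, (Polynomial.X - Polynomial.C a) := by
      rw [Polynomial.modByMonic_eq_self_iff (by
        have hh : q - 1 + 1 = q := by omega
        rw [← hh]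
        apply Polynomial.monic_X_pow_sub
        rw [Polynomial.degree_X]
        exact_mod_cast (show (1:ℕ) < q - 1 + 1 by omega)), hdp, hdm]
      exact_mod_cast (show q - 1 - r < q by omega)
    rw [hself, hdp]
    exact_mod_cast (show q - 1 - r < q - r by omega)
  case _ =>
    have hcompl : (Sᶜ : Finset F).Nonempty := by
      rw [← Finset.card_pos, Finset.card_compl, hS, hq]; omega
    obtain ⟨u₀, hu₀⟩ := hcompl
    rw [Finset.mem_compl] at hu₀
    intro h0
    have heval : MvPolynomial.eval ![u₀, (0:F)] (∏ a ∈ S, (MvPolynomial.X 0 - MvPolynomial.C a))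
        = ∏ a ∈ S, (u₀ - a) := by
      rw [map_prod]
      exact Finset.prod_congr rfl fun a _ => by simp
    rw [h0] at heval
    simp only [map_zero] at heval
    have : ∏ a ∈ S, (u₀ - a) ≠ 0 :=
      Finset.prod_ne_zero_iff.mpr fun a ha =>
        sub_ne_zero.mpr fun h => hu₀ (h ▸ ha)
    exact this heval.symm
  case _ =>
    classical
    have heval : ∀ p : F × F,
        MvPolynomial.eval ![p.1, p.2] (∏ a ∈ S, (MvPolynomial.X 0 - MvPolynomial.C a))
        = ∏ a ∈ S, (p.1 - a) := by
      intro p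
      rw [map_prod]
      exact Finset.prod_congr rfl fun a _ => by simp
    have hZ : (Finset.univ.filter fun p : F × F =>
        MvPolynomial.eval ![p.1, p.2] (∏ a ∈ S, (MvPolynomial.X 0 - MvPolynomial.C a)) ≠ 0)
        = Sᶜ ×ˢ Finset.univ := by
      ext p
      rw [Finset.mem_filter, Finset.mem_product]
      simp only [Finset.mem_univ, true_and, and_true, Finset.mem_compl, heval]
      rw [Finset.prod_ne_zero_iff]
      constructor
      · intro h hp
        exact h p.1 hp (sub_self p.1)
      · intro h a ha hz
        rw [sub_eq_zero] at hz
        exact h (hz ▸ ha)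
    have hcard : Nat.card {p : F × F //
        MvPolynomial.eval ![p.1, p.2] (∏ a ∈ S, (MvPolynomial.X 0 - MvPolynomial.C a)) ≠ 0}
        = (r + 1) * q := by
      rw [Nat.card_eq_fintype_card, Fintype.card_subtype, hZ, Finset.card_product,
        Finset.card_compl, Finset.card_univ, hq, hS]
      congr 1
      omega
    rw [hcard]
    have : (r + 1) * q = q * r + q := by ring
    omega

/-- Minimum-distance bounds for quadratic-lifted Reed–Solomon codes:
every nonzero codeword polynomial has at least `qr + 1` nonzero evaluations on `F_q²`,
and some nonzero codeword polynomial has at most `qr + q` nonzero evaluations. -/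
theorem stmt_10 (F : Type*) [Field F] [Fintype F]
    (ℓ : ℕ) (hℓ : 1 ≤ ℓ) (hF : Fintype.card F = 2 ^ ℓ)
    (r : ℕ) (hr1 : 1 ≤ r) (hr2 : r ≤ 2 ^ ℓ - 1) :
    (∀ f : MvPolynomial (Fin 2) F,
      MvPolynomial.degreeOf 0 f ≤ 2 ^ ℓ - 1 →
      MvPolynomial.degreeOf 1 f ≤ 2 ^ ℓ - 1 →
      (∀ α β γ : F,
        ((MvPolynomial.aeval
              ![Polynomial.X,
                Polynomial.C α * Polynomial.X ^ 2 + Polynomial.C β * Polynomial.X +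
                  Polynomial.C γ] f) %ₘ
            (Polynomial.X ^ (2 ^ ℓ) - Polynomial.X)).degree <
          ((2 ^ ℓ - r : ℕ) : WithBot ℕ)) →
      f ≠ 0 →
      2 ^ ℓ * r + 1 ≤ Nat.card {p : F × F // MvPolynomial.eval ![p.1, p.2] f ≠ 0}) ∧
    (∃ f : MvPolynomial (Fin 2) F,
      MvPolynomial.degreeOf 0 f ≤ 2 ^ ℓ - 1 ∧
      MvPolynomial.degreeOf 1 f ≤ 2 ^ ℓ - 1 ∧
      (∀ α β γ : F,
        ((MvPolynomial.aeval
              ![Polynomial.X,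
                Polynomial.C α * Polynomial.X ^ 2 + Polynomial.C β * Polynomial.X +
                  Polynomial.C γ] f) %ₘ
            (Polynomial.X ^ (2 ^ ℓ) - Polynomial.X)).degree <
          ((2 ^ ℓ - r : ℕ) : WithBot ℕ)) ∧
      f ≠ 0 ∧
      Nat.card {p : F × F // MvPolynomial.eval ![p.1, p.2] f ≠ 0} ≤ 2 ^ ℓ * r + 2 ^ ℓ) := by
  letI := Classical.decEq F
  have h2 : 2 ≤ 2 ^ ℓ := by
    calc 2 = 2 ^ 1 := by norm_num
      _ ≤ 2 ^ ℓ := Nat.pow_le_pow_right (by norm_num) hℓ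
  have hrq : r + 1 ≤ 2 ^ ℓ := by omega
  constructor
  · intro f h0 h1 hc hf
    exact partI hF h2 hrq f h0 h1 hc hf
  · exact partII hF h2 hrq
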